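/- Fix a, b ∈ ℝ and define f : ℝ → ℝ by f(s) = Φ(a − s) − b·exp(a·s − s²/2). If 0 < b < Φ(a), then there is exactly one s₀ ∈ ℝ such that f(s₀) = 0, and this s₀ satisfies 0 < s₀ < φ(a)/b + a. -/

import Mathlib

open Real

/-- The standard normal density `φ(u) = (2π)^{-1/2} exp(-u²/2)`. -/
noncomputable def stdNormalPDF (u : ℝ) : ℝ := (Real.sqrt (2 * Real.pi))⁻¹ * Real.exp (-u ^ 2 / 2)

/-- The standard normal cumulative distribution function `Φ`. -/
noncomputable def stdNormalCDF (x : ℝ) : ℝ := ∫ u in Set.Iic x, stdNormalPDF u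

open Set MeasureTheory Filter

lemma pdf_pos (u : ℝ) : 0 < stdNormalPDF u := by
  unfold stdNormalPDF
  positivity

lemma pdf_hasDeriv (u : ℝ) : HasDerivAt stdNormalPDF (-u * stdNormalPDF u) u := by
  have h1 : HasDerivAt (fun x : ℝ => -x ^ 2 / 2) (-u) u := by
    have := ((hasDerivAt_pow 2 u).neg).div_const 2
    exact this.congr_deriv (by push_cast; ring)
  have h2 := h1.exp
  have h3 := h2.const_mul (Real.sqrt (2 * Real.pi))⁻¹
  refine h3.congr_deriv ?_
  unfold stdNormalPDF; ring

lemma pdf_continuous : Continuous stdNormalPDF :=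
  continuous_iff_continuousAt.2 fun u => (pdf_hasDeriv u).continuousAt

lemma pdf_tendsto_atBot : Tendsto stdNormalPDF atBot (nhds 0) := by
  have h1 : Tendsto (fun u : ℝ => -u ^ 2 / 2) atBot atBot := by
    apply tendsto_atBot_mono' _ _ tendsto_id
    filter_upwards [Iic_mem_atBot (-2 : ℝ)] with u hu
    have hu' : u ≤ -2 := hu
    simp only [id]
    nlinarith [sq_nonneg (u + 2)]
  have h2 : Tendsto (fun u : ℝ => Real.exp (-u ^ 2 / 2)) atBot (nhds 0) :=
    Real.tendsto_exp_atBot.comp h1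
  have h3 := h2.const_mul (Real.sqrt (2 * Real.pi))⁻¹
  rw [mul_zero] at h3
  exact h3

lemma pdf_integrable : Integrable stdNormalPDF := by
  have h := (integrable_exp_neg_mul_sq (by norm_num : (0:ℝ) < 1/2)).const_mul
    (Real.sqrt (2 * Real.pi))⁻¹
  apply h.congr
  filter_upwards with u
  unfold stdNormalPDF
  ring_nf

lemma neg_id_mul_pdf_integrable : Integrable (fun u : ℝ => -u * stdNormalPDF u) := by
  have h := (integrable_mul_exp_neg_mul_sq (by norm_num : (0:ℝ) < 1/2)).const_mul
    (-(Real.sqrt (2 * Real.pi))⁻¹)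
  apply h.congr
  filter_upwards with u
  unfold stdNormalPDF
  ring_nf

lemma integral_neg_id_mul_pdf (t : ℝ) :
    ∫ u in Iic t, (-u * stdNormalPDF u) = stdNormalPDF t := by
  have := MeasureTheory.integral_Iic_of_hasDerivAt_of_tendsto'
    (f := stdNormalPDF) (f' := fun u => -u * stdNormalPDF u) (a := t)
    (fun x _ => pdf_hasDeriv x) neg_id_mul_pdf_integrable.integrableOn pdf_tendsto_atBot
  simpa using this

lemma key (t : ℝ) : 0 < stdNormalPDF t + t * stdNormalCDF t := by
  have hint : IntegrableOn (fun u : ℝ => (t - u) * stdNormalPDF u) (Iic t) := by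
    have : (fun u : ℝ => (t - u) * stdNormalPDF u)
        = fun u => t * stdNormalPDF u + (-u * stdNormalPDF u) := by
      funext u; ring
    rw [this]
    exact ((pdf_integrable.const_mul t).add neg_id_mul_pdf_integrable).integrableOn
  have h1 : ∫ u in Iic t, (t - u) * stdNormalPDF u
      = stdNormalPDF t + t * stdNormalCDF t := by
    have heq : (fun u : ℝ => (t - u) * stdNormalPDF u)
        = fun u => t * stdNormalPDF u + (-u * stdNormalPDF u) := by
      funext u; ring
    rw [heq, integral_add ((pdf_integrable.const_mul t).integrableOn)
        (neg_id_mul_pdf_integrable.integrableOn), integral_neg_id_mul_pdf,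
        MeasureTheory.integral_const_mul]
    unfold stdNormalCDF
    ring
  rw [← h1]
  apply (setIntegral_pos_iff_support_of_nonneg_ae _ _).2
  · apply lt_of_lt_of_le _ (measure_mono (show Iio t ⊆ _ from ?_))
    · rw [Real.volume_Iio]; exact ENNReal.zero_lt_top
    · intro u hu
      have hu' : u < t := hu
      constructor
      · simp only [Function.mem_support]
        exact ne_of_gt (mul_pos (by linarith) (pdf_pos u))
      · exact le_of_lt hu'
  · rw [EventuallyLE, ae_restrict_iff' measurableSet_Iic]
    filter_upwards with u hu
    exact mul_nonneg (by linarith [mem_Iic.1 hu]) (pdf_pos u).le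
  · exact hint

lemma cdf_hasDeriv (x : ℝ) : HasDerivAt stdNormalCDF (stdNormalPDF x) x := by
  have hrepr : stdNormalCDF = fun y => stdNormalCDF 0 + ∫ u in (0:ℝ)..y, stdNormalPDF u := by
    funext y
    rw [← intervalIntegral.integral_Iic_sub_Iic pdf_integrable.integrableOn
        pdf_integrable.integrableOn]
    unfold stdNormalCDF; ring
  rw [hrepr]
  have h := intervalIntegral.integral_hasDerivAt_right (a := 0) (b := x)
    (pdf_integrable.intervalIntegrable)
    (pdf_continuous.stronglyMeasurableAtFilter _ _)
    (pdf_continuous.continuousAt)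
  exact h.const_add _

/-- The auxiliary function `H(t) = Φ(t)·exp(t²/2)`. -/
noncomputable def Hfun (t : ℝ) : ℝ := stdNormalCDF t * Real.exp (t ^ 2 / 2)

lemma Hfun_hasDeriv (t : ℝ) : HasDerivAt Hfun
    ((stdNormalPDF t + t * stdNormalCDF t) * Real.exp (t ^ 2 / 2)) t := by
  have h2 : HasDerivAt (fun t : ℝ => Real.exp (t ^ 2 / 2)) (t * Real.exp (t ^ 2 / 2)) t := by
    have h1 : HasDerivAt (fun x : ℝ => x ^ 2 / 2) t t := by
      have := (hasDerivAt_pow 2 t).div_const 2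
      exact this.congr_deriv (by push_cast; ring)
    have := h1.exp
    convert this using 1; ring
  have := (cdf_hasDeriv t).mul h2
  refine this.congr_deriv ?_
  ring

lemma Hfun_mono : StrictMono Hfun := by
  apply strictMono_of_deriv_pos
  intro t
  rw [(Hfun_hasDeriv t).deriv]
  exact mul_pos (key t) (Real.exp_pos _)

lemma Hfun_continuous : Continuous Hfun :=
  continuous_iff_continuousAt.2 fun t => (Hfun_hasDeriv t).continuousAt

lemma mills {t : ℝ} (ht : t < 0) : Hfun t < (Real.sqrt (2 * Real.pi))⁻¹ / (-t) := by
  have hk := key t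
  have hφ : stdNormalPDF t * Real.exp (t ^ 2 / 2) = (Real.sqrt (2 * Real.pi))⁻¹ := by
    unfold stdNormalPDF
    rw [mul_assoc, ← Real.exp_add, show -t ^ 2 / 2 + t ^ 2 / 2 = 0 by ring, Real.exp_zero,
      mul_one]
  rw [lt_div_iff₀ (by linarith : (0:ℝ) < -t), ← hφ]
  unfold Hfun
  nlinarith [mul_pos (Real.exp_pos (t ^ 2 / 2)) hk]

lemma zero_iff (a b s : ℝ) :
    stdNormalCDF (a - s) - b * Real.exp (a * s - s ^ 2 / 2) = 0
      ↔ Hfun (a - s) = b * Real.exp (a ^ 2 / 2) := by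
  have hE : Real.exp (a * s - s ^ 2 / 2) * Real.exp ((a - s) ^ 2 / 2)
      = Real.exp (a ^ 2 / 2) := by
    rw [← Real.exp_add]; congr 1; ring
  unfold Hfun
  constructor
  · intro h
    have h' : stdNormalCDF (a - s) = b * Real.exp (a * s - s ^ 2 / 2) := by linarith
    rw [h', mul_assoc, hE]
  · intro h
    have h2 : stdNormalCDF (a - s) * Real.exp ((a - s) ^ 2 / 2)
        = (b * Real.exp (a * s - s ^ 2 / 2)) * Real.exp ((a - s) ^ 2 / 2) := by
      rw [h, mul_assoc, hE]
    have := mul_right_cancel₀ (Real.exp_pos ((a - s) ^ 2 / 2)).ne' h2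
    linarith

/-- For `f(s) = Φ(a-s) - b·exp(a·s - s²/2)` with `0 < b < Φ(a)`, there is exactly one zero
`s₀` of `f`, and it satisfies `0 < s₀ < φ(a)/b + a`. -/
theorem unique_zero_of_cdf_minus_exp (a b : ℝ) (hb : 0 < b) (hbΦ : b < stdNormalCDF a) :
    (∃! s₀ : ℝ, stdNormalCDF (a - s₀) - b * Real.exp (a * s₀ - s₀ ^ 2 / 2) = 0) ∧
    (∀ s₀ : ℝ, stdNormalCDF (a - s₀) - b * Real.exp (a * s₀ - s₀ ^ 2 / 2) = 0 →
      0 < s₀ ∧ s₀ < stdNormalPDF a / b + a) := by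
  set c : ℝ := (Real.sqrt (2 * Real.pi))⁻¹ with hc
  have hcpos : 0 < c := by
    rw [hc]
    positivity
  set B : ℝ := b * Real.exp (a ^ 2 / 2) with hBdef
  have hBpos : 0 < B := by positivity
  have hHa : B < Hfun a := by
    unfold Hfun
    exact mul_lt_mul_of_pos_right hbΦ (Real.exp_pos _)
  have hcB : c / B = stdNormalPDF a / b := by
    have hone : Real.exp (-a ^ 2 / 2) * Real.exp (a ^ 2 / 2) = 1 := by
      rw [← Real.exp_add, show -a ^ 2 / 2 + a ^ 2 / 2 = 0 by ring, Real.exp_zero]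
    unfold stdNormalPDF
    rw [hBdef, div_eq_div_iff (by positivity) hb.ne']
    rw [← hc]
    linear_combination (-(c * b)) * hone
  -- existence
  obtain ⟨t₁, ht₁a, ht₁⟩ : ∃ t₁, t₁ < a ∧ Hfun t₁ < B := by
    refine ⟨min a (-(c / B)) - 1, by linarith [min_le_left a (-(c / B))], ?_⟩
    have hm : min a (-(c / B)) ≤ -(c / B) := min_le_right _ _
    have hdiv : 0 < c / B := div_pos hcpos hBpos
    have hneg : min a (-(c / B)) - 1 < 0 := by linarith
    calc Hfun (min a (-(c / B)) - 1) < c / (-(min a (-(c / B)) - 1)) := mills hneg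
      _ < B := by
        rw [div_lt_iff₀ (by linarith)]
        have hcb : c = B * (c / B) := by field_simp
        nlinarith
  obtain ⟨t₀, _, ht₀⟩ := intermediate_value_Ioo ht₁a.le (Hfun_continuous.continuousOn)
    (mem_Ioo.2 ⟨ht₁, hHa⟩)
  have hbound : ∀ s₀ : ℝ, stdNormalCDF (a - s₀) - b * Real.exp (a * s₀ - s₀ ^ 2 / 2) = 0 →
      0 < s₀ ∧ s₀ < stdNormalPDF a / b + a := by
    intro s hs
    rw [zero_iff] at hs
    constructor
    · have : Hfun (a - s) < Hfun a := by rw [hs]; exact hHa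
      have := Hfun_mono.lt_iff_lt.1 this
      linarith
    · rcases le_or_gt s a with h | h
      · have : 0 < stdNormalPDF a / b := div_pos (pdf_pos a) hb
        linarith
      · have hneg : a - s < 0 := by linarith
        have hm := mills hneg
        rw [hs] at hm
        have hsa : 0 < s - a := by linarith
        have : B * (s - a) < c := by
          rw [lt_div_iff₀ (by linarith : (0:ℝ) < -(a - s))] at hm
          nlinarith
        have : s - a < c / B := by
          rw [lt_div_iff₀ hBpos]
          nlinarith
        rw [hcB] at this
        linarith
  refine ⟨⟨a - t₀, ?_, ?_⟩, hbound⟩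
  · show stdNormalCDF (a - (a - t₀)) - b * Real.exp (a * (a - t₀) - (a - t₀) ^ 2 / 2) = 0
    rw [zero_iff]
    simpa using ht₀
  · intro s hs
    replace hs : stdNormalCDF (a - s) - b * Real.exp (a * s - s ^ 2 / 2) = 0 := hs
    rw [zero_iff] at hs
    have : Hfun (a - s) = Hfun t₀ := by rw [hs, ht₀]
    have := Hfun_mono.injective this
    linarith
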